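/- arXiv:2107.01658 — 2 statements merged into one kernel-verified Lean document; each statement's English description precedes it below -/
import Mathlib

section
/- Let S and M = LᵀL be p × p positive semidefinite matrices with smallest eigenvalues λ₁(S) and λ₁(M). If μ ≤ λ₁(S)·λ₁(M), then the function f(P) = (1/2)·tr(L P S Pᵀ Lᵀ) − (μ/2)·‖P‖_F² is convex on the space of p × p real matrices P. -/
open Matrix BigOperators
open scoped MatrixOrder

private lemma trace_nonneg_of_psd {p : ℕ} {A : Matrix (Fin p) (Fin p) ℝ}
    (hA : A.PosSemidef) : 0 ≤ A.trace := by
  rw [Matrix.trace]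
  refine Finset.sum_nonneg fun i _ => ?_
  have := hA.dotProduct_mulVec_nonneg (Pi.single i 1)
  simpa [dotProduct, Matrix.mulVec, Pi.single_apply] using this

private lemma trace_mul_nonneg' {p : ℕ} {A B : Matrix (Fin p) (Fin p) ℝ}
    (hA : A.PosSemidef) (hB : B.PosSemidef) : 0 ≤ (A * B).trace := by
  have h : (A * B).trace = (CFC.sqrt A * B * (CFC.sqrt A)ᴴ).trace := by
    rw [(CFC.sqrt_nonneg A).posSemidef.isHermitian, Matrix.trace_mul_cycle,
      CFC.sqrt_mul_sqrt_self A hA.nonneg]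
  rw [h]
  exact trace_nonneg_of_psd (hB.mul_mul_conjTranspose_same (CFC.sqrt A))

private lemma psd_sub_smul {p : ℕ} {A : Matrix (Fin p) (Fin p) ℝ} (hA : A.PosSemidef) (c : ℝ)
    (hc : ∀ i, c ≤ hA.1.eigenvalues i) : (A - c • 1).PosSemidef := by
  have hdiag : Matrix.PosSemidef (Matrix.diagonal (fun i => hA.1.eigenvalues i - c)) :=
    Matrix.PosSemidef.diagonal (fun i => sub_nonneg.2 (hc i))
  have h := hdiag.mul_mul_conjTranspose_same (hA.1.eigenvectorUnitary : Matrix (Fin p) (Fin p) ℝ)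
  have hU : (hA.1.eigenvectorUnitary : Matrix (Fin p) (Fin p) ℝ) *
      (star (hA.1.eigenvectorUnitary : Matrix (Fin p) (Fin p) ℝ)) = 1 :=
    Matrix.mem_unitaryGroup_iff.mp (hA.1.eigenvectorUnitary).2
  have hdd : Matrix.diagonal (fun i => hA.1.eigenvalues i - c) =
      Matrix.diagonal (RCLike.ofReal ∘ hA.1.eigenvalues) - c • 1 := by
    ext i j
    by_cases hij : i = j <;> simp [Matrix.diagonal_apply, hij, Matrix.one_apply]
  rw [hdd] at h
  have key : (hA.1.eigenvectorUnitary : Matrix (Fin p) (Fin p) ℝ) *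
      (Matrix.diagonal (RCLike.ofReal ∘ hA.1.eigenvalues) - c • 1) *
      (hA.1.eigenvectorUnitary : Matrix (Fin p) (Fin p) ℝ)ᴴ = A - c • 1 := by
    rw [Matrix.mul_sub, Matrix.sub_mul]
    congr 1
    · have hst := hA.1.spectral_theorem
      rw [Unitary.conjStarAlgAut_apply, Matrix.star_eq_conjTranspose] at hst
      exact hst.symm
    · rw [Matrix.mul_smul, Matrix.smul_mul, mul_one, ← Matrix.star_eq_conjTranspose, hU]
  rwa [key] at h

private lemma quad_bound {p : ℕ} (hp : 0 < p)
    (S L : Matrix (Fin p) (Fin p) ℝ) (hS : S.PosSemidef)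
    (hM : (Lᵀ * L).PosSemidef) (μ : ℝ)
    (hμ : μ ≤ (⨅ i, hS.1.eigenvalues i) * (⨅ i, hM.1.eigenvalues i))
    (P : Matrix (Fin p) (Fin p) ℝ) :
    μ * ∑ i, ∑ j, (P i j) ^ 2 ≤ (L * P * S * Pᵀ * Lᵀ).trace := by
  haveI : Nonempty (Fin p) := ⟨⟨0, hp⟩⟩
  set lS := ⨅ i, hS.1.eigenvalues i with hlS
  set lM := ⨅ i, hM.1.eigenvalues i with hlM
  have hlSle : ∀ i, lS ≤ hS.1.eigenvalues i := fun i =>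
    ciInf_le (Set.Finite.bddBelow (Set.finite_range _)) i
  have hlMle : ∀ i, lM ≤ hM.1.eigenvalues i := fun i =>
    ciInf_le (Set.Finite.bddBelow (Set.finite_range _)) i
  have hlS0 : 0 ≤ lS := le_ciInf fun i => hS.eigenvalues_nonneg i
  have hlM0 : 0 ≤ lM := le_ciInf fun i => hM.eigenvalues_nonneg i
  have hPt : Pᴴ = Pᵀ := by ext i j; simp [Matrix.conjTranspose_apply]
  have hPSP : (P * S * Pᵀ).PosSemidef := hPt ▸ hS.mul_mul_conjTranspose_same P
  have hPtP : (Pᵀ * P).PosSemidef := hPt ▸ Matrix.posSemidef_conjTranspose_mul_self P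
  -- rewrite the trace
  have ht1 : (L * P * S * Pᵀ * Lᵀ).trace = ((Lᵀ * L) * (P * S * Pᵀ)).trace := by
    rw [Matrix.trace_mul_cycle]; simp only [Matrix.mul_assoc]
  have ht2 : (P * S * Pᵀ).trace = (S * (Pᵀ * P)).trace := by
    rw [Matrix.trace_mul_cycle, ← Matrix.mul_assoc, Matrix.trace_mul_comm, Matrix.mul_assoc]
  have ht3 : (Pᵀ * P).trace = ∑ i, ∑ j, (P i j) ^ 2 := by
    rw [Matrix.trace]
    rw [Finset.sum_comm]
    congr 1; ext i
    simp [Matrix.diag, Matrix.mul_apply, sq]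
  -- step 1
  have h1 : 0 ≤ (((Lᵀ * L) - lM • 1) * (P * S * Pᵀ)).trace :=
    trace_mul_nonneg' (psd_sub_smul hM lM hlMle) hPSP
  rw [Matrix.sub_mul, Matrix.trace_sub, Matrix.smul_mul, Matrix.one_mul,
    Matrix.trace_smul, smul_eq_mul, sub_nonneg] at h1
  -- step 2
  have h2 : 0 ≤ ((S - lS • 1) * (Pᵀ * P)).trace :=
    trace_mul_nonneg' (psd_sub_smul hS lS hlSle) hPtP
  rw [Matrix.sub_mul, Matrix.trace_sub, Matrix.smul_mul, Matrix.one_mul,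
    Matrix.trace_smul, smul_eq_mul, sub_nonneg] at h2
  have h3 : 0 ≤ (Pᵀ * P).trace := trace_nonneg_of_psd hPtP
  have h4 : 0 ≤ (P * S * Pᵀ).trace := trace_nonneg_of_psd hPSP
  rw [ht1, ← ht3]
  calc μ * (Pᵀ * P).trace ≤ lS * lM * (Pᵀ * P).trace := by nlinarith
    _ ≤ ((Lᵀ * L) * (P * S * Pᵀ)).trace := by
        rw [ht2] at h1
        nlinarith [mul_le_mul_of_nonneg_left h2 hlM0, h1]

private lemma T_comb {p : ℕ} (L S : Matrix (Fin p) (Fin p) ℝ) (a b : ℝ)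
    (x y : Matrix (Fin p) (Fin p) ℝ) :
    (L * (a • x + b • y) * S * (a • x + b • y)ᵀ * Lᵀ).trace
      = a * a * (L * x * S * xᵀ * Lᵀ).trace + a * b * (L * x * S * yᵀ * Lᵀ).trace
        + a * b * (L * y * S * xᵀ * Lᵀ).trace + b * b * (L * y * S * yᵀ * Lᵀ).trace := by
  simp only [Matrix.mul_add, Matrix.add_mul, Matrix.mul_smul, Matrix.smul_mul,
    Matrix.transpose_add, Matrix.transpose_smul, Matrix.trace_add, Matrix.trace_smul,
    smul_eq_mul]
  ring

private lemma T_sub {p : ℕ} (L S : Matrix (Fin p) (Fin p) ℝ)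
    (x y : Matrix (Fin p) (Fin p) ℝ) :
    (L * (x - y) * S * (x - y)ᵀ * Lᵀ).trace
      = (L * x * S * xᵀ * Lᵀ).trace - (L * x * S * yᵀ * Lᵀ).trace
        - (L * y * S * xᵀ * Lᵀ).trace + (L * y * S * yᵀ * Lᵀ).trace := by
  simp only [Matrix.mul_sub, Matrix.sub_mul, Matrix.transpose_sub, Matrix.trace_sub]
  ring

private lemma N_comb {p : ℕ} (a b : ℝ) (x y : Matrix (Fin p) (Fin p) ℝ) :
    ∑ i, ∑ j, ((a • x + b • y) i j) ^ 2
      = a * a * ∑ i, ∑ j, (x i j) ^ 2 + 2 * (a * b) * ∑ i, ∑ j, x i j * y i j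
        + b * b * ∑ i, ∑ j, (y i j) ^ 2 := by
  have h : ∀ i j, ((a • x + b • y) i j) ^ 2
      = a * a * (x i j) ^ 2 + 2 * (a * b) * (x i j * y i j) + b * b * (y i j) ^ 2 := by
    intro i j
    simp only [Matrix.add_apply, Matrix.smul_apply, smul_eq_mul]
    ring
  simp only [h, Finset.sum_add_distrib, Finset.mul_sum]

private lemma N_sub {p : ℕ} (x y : Matrix (Fin p) (Fin p) ℝ) :
    ∑ i, ∑ j, ((x - y) i j) ^ 2
      = ∑ i, ∑ j, (x i j) ^ 2 - 2 * ∑ i, ∑ j, x i j * y i j + ∑ i, ∑ j, (y i j) ^ 2 := by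
  have h : ∀ i j, ((x - y) i j) ^ 2
      = (x i j) ^ 2 - 2 * (x i j * y i j) + (y i j) ^ 2 := by
    intro i j
    simp only [Matrix.sub_apply]
    ring
  simp only [h, Finset.sum_add_distrib, Finset.sum_sub_distrib, Finset.mul_sum]

/-- If `μ ≤ λ₁(S)·λ₁(LᵀL)` (products of smallest eigenvalues), then
`P ↦ (1/2)·tr(L P S Pᵀ Lᵀ) − (μ/2)·‖P‖_F²` is convex on matrix space. -/
theorem convexity_of_penalized_score {p : ℕ} (hp : 0 < p)
    (S L : Matrix (Fin p) (Fin p) ℝ) (hS : S.PosSemidef)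
    (hM : (Lᵀ * L).PosSemidef) (μ : ℝ)
    (hμ : μ ≤ (⨅ i, hS.1.eigenvalues i) * (⨅ i, hM.1.eigenvalues i)) :
    ConvexOn ℝ Set.univ
      (fun P : Matrix (Fin p) (Fin p) ℝ =>
        (1 / 2) * (L * P * S * Pᵀ * Lᵀ).trace -
          (μ / 2) * ∑ i, ∑ j, (P i j) ^ 2) := by
  refine ⟨convex_univ, ?_⟩
  rintro x - y - a b ha hb hab
  simp only [smul_eq_mul]
  have key := quad_bound hp S L hS hM μ hμ (x - y)
  rw [T_sub, N_sub] at key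
  rw [T_comb, N_comb]
  have hb1 : b = 1 - a := by linarith
  subst hb1
  have h5 := mul_le_mul_of_nonneg_left key (mul_nonneg ha hb)
  nlinarith [h5]
end

section
/- The Gaussian negative log-likelihood score ℓ(L, P) = (1/2)·tr(P S Pᵀ Lᵀ L) − ∑_{j=1}^p log L_{jj} is permutation invariant: for every p × p permutation matrix P and every symmetric positive semidefinite matrix S, the infimum of ℓ(L, P) over lower triangular matrices L with positive diagonal equals the infimum of ℓ(L, I) over the same set. -/
open Matrix BigOperators

/-- Lower triangular matrices with strictly positive diagonal entries. -/
def LowerTriPos {p : ℕ} (L : Matrix (Fin p) (Fin p) ℝ) : Prop :=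
  (∀ i j : Fin p, (i : ℕ) < (j : ℕ) → L i j = 0) ∧ (∀ i, 0 < L i i)

/-- The Gaussian negative log-likelihood score
`ℓ(L,P) = (1/2)·tr(P S Pᵀ Lᵀ L) − ∑ log L_jj`. -/
noncomputable def nllScore {p : ℕ}
    (L P S : Matrix (Fin p) (Fin p) ℝ) : ℝ :=
  (1 / 2) * (P * S * Pᵀ * Lᵀ * L).trace - ∑ j, Real.log (L j j)

lemma posdef_conj {p : ℕ} {A Q : Matrix (Fin p) (Fin p) ℝ} (hA : A.PosDef)
    (hQ : IsUnit Q.det) : (Qᵀ * A * Q).PosDef := by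
  refine Matrix.PosDef.of_dotProduct_mulVec_pos ?_ fun x hx => ?_
  · have h1 : Aᵀ = A := by
      rw [← Matrix.conjTranspose_eq_transpose_of_trivial]; exact hA.1
    simp [Matrix.IsHermitian, conjTranspose_mul, Matrix.mul_assoc,
      Matrix.conjTranspose_eq_transpose_of_trivial, h1]
  · have hinj : Function.Injective (Q.mulVec) :=
      Matrix.mulVec_injective_iff_isUnit.mpr (Matrix.isUnit_iff_isUnit_det _ |>.mpr hQ)
    have hz : Q.mulVec x ≠ 0 := by
      intro h
      exact hx (hinj (by simpa using h))
    have := hA.dotProduct_mulVec_pos hz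
    calc 0 < star (Q *ᵥ x) ⬝ᵥ (A *ᵥ (Q *ᵥ x)) := this
    _ = star x ⬝ᵥ ((Qᵀ * A * Q) *ᵥ x) := by
        simp only [star_trivial, ← Matrix.mulVec_mulVec, Matrix.dotProduct_mulVec,
          Matrix.vecMul_transpose]

lemma revChol {p : ℕ} {A : Matrix (Fin p) (Fin p) ℝ} (hA : A.PosDef) :
    ∃ L : Matrix (Fin p) (Fin p) ℝ, LowerTriPos L ∧ Lᵀ * L = A := by
  set e : Equiv.Perm (Fin p) := Fin.revPerm with he
  set B : Matrix (Fin p) (Fin p) ℝ := A.submatrix e e with hBdef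
  -- B is positive definite
  have hB : B.PosDef := by
    have hP : B = (e.permMatrix ℝ)ᵀ * A * (e.permMatrix ℝ) := by
      rw [← PEquiv.toMatrix_symm, ← Equiv.toPEquiv_symm,
        PEquiv.toMatrix_toPEquiv_mul, PEquiv.mul_toMatrix_toPEquiv]
      ext i j; simp [hBdef, he]
    rw [hP]
    refine posdef_conj hA ?_
    rw [Matrix.det_permutation]
    refine isUnit_iff_ne_zero.mpr ?_
    exact_mod_cast @Units.ne_zero ℤ _ _ (Equiv.Perm.sign e)
  -- LDL decomposition of B
  haveI : WellFoundedLT (Fin p) := inferInstance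
  have einst : (fun a b => LinearOrder.toDecidableEq a b : DecidableEq (Fin p)) = instDecidableEqFin p :=
    Subsingleton.elim _ _
  set W : Matrix (Fin p) (Fin p) ℝ := @LDL.lowerInv ℝ _ (Fin p) _ _ _ B _ hB with hWdef
  haveI : Invertible W := by
    have h := LDL.invertibleLowerInv hB
    rw [einst] at h
    exact h
  have hWtri : ∀ i j : Fin p, i < j → W i j = 0 := fun i j hij =>
    LDL.lowerInv_triangular hB hij
  have hWinvtri : ∀ i j : Fin p, i < j → W⁻¹ i j = 0 := by
    have hbt : W.BlockTriangular (OrderDual.toDual : Fin p → (Fin p)ᵒᵈ) := by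
      intro i j h
      exact hWtri i j h
    have := Matrix.blockTriangular_inv_of_blockTriangular hbt
    intro i j hij
    exact this hij
  have hWdiag : ∀ i : Fin p, W i i * W⁻¹ i i = 1 := by
    intro i
    have h1 : (W * W⁻¹) i i = 1 := by
      rw [Matrix.mul_inv_of_invertible]; simp
    rw [Matrix.mul_apply] at h1
    rw [← h1]
    refine (Finset.sum_eq_single (f := fun k => W i k * W⁻¹ k i) i ?_ ?_).symm
    · intro k _ hk
      rcases lt_or_gt_of_ne hk with h | h
      · show W i k * W⁻¹ k i = 0; rw [hWinvtri k i h, mul_zero]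
      · show W i k * W⁻¹ k i = 0; rw [hWtri i k h, zero_mul]
    · intro h; exact absurd (Finset.mem_univ i) h
  set d : Fin p → ℝ := LDL.diagEntries hB with hddef
  have hDconj : Matrix.diagonal d = W * B * Wᵀ := by
    rw [hddef, hWdef, ← Matrix.conjTranspose_eq_transpose_of_trivial]
    have h := LDL.diag_eq_lowerInv_conj hB
    rw [LDL.diag, einst] at h
    exact h
  have hdpos : ∀ i, 0 < d i := by
    have hpd : (Matrix.diagonal d).PosDef := by
      rw [hDconj, show W * B * Wᵀ = (Wᵀ)ᵀ * B * Wᵀ by rw [Matrix.transpose_transpose]]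
      refine posdef_conj hB ?_
      rw [Matrix.det_transpose]
      exact (Matrix.isUnit_iff_isUnit_det W).mp (isUnit_of_invertible W)
    exact fun i => Matrix.posDef_diagonal_iff.mp hpd i
  have hWu : IsUnit W.det := (Matrix.isUnit_iff_isUnit_det W).mp (isUnit_of_invertible W)
  -- B = W⁻¹ * diagonal d * (W⁻¹)ᵀ
  have hB' : B = W⁻¹ * Matrix.diagonal d * (W⁻¹)ᵀ := by
    have h1 : W⁻¹ * (W * B * Wᵀ) * (W⁻¹)ᵀ = B := by
      rw [Matrix.transpose_nonsing_inv]
      have h2 : W⁻¹ * (W * B * Wᵀ) * (Wᵀ)⁻¹ = (W⁻¹ * W) * B * (Wᵀ * (Wᵀ)⁻¹) := by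
        simp only [Matrix.mul_assoc]
      rw [h2, Matrix.nonsing_inv_mul W hWu,
        Matrix.mul_nonsing_inv Wᵀ (by rwa [Matrix.det_transpose]),
        Matrix.one_mul, Matrix.mul_one]
    rw [← h1, ← hDconj]
  set M₀ : Matrix (Fin p) (Fin p) ℝ :=
    W⁻¹ * Matrix.diagonal (fun i => Real.sqrt (d i)) with hM0def
  have hM0app : ∀ i j, M₀ i j = W⁻¹ i j * Real.sqrt (d j) := by
    intro i j; rw [hM0def, Matrix.mul_diagonal]
  have hBfact : B = M₀ * M₀ᵀ := by
    rw [hM0def, Matrix.transpose_mul, Matrix.diagonal_transpose]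
    have h3 : W⁻¹ * Matrix.diagonal (fun i => Real.sqrt (d i)) *
        (Matrix.diagonal (fun i => Real.sqrt (d i)) * (W⁻¹)ᵀ) =
        W⁻¹ * (Matrix.diagonal (fun i => Real.sqrt (d i)) *
          Matrix.diagonal (fun i => Real.sqrt (d i))) * (W⁻¹)ᵀ := by
      simp only [Matrix.mul_assoc]
    rw [h3, Matrix.diagonal_mul_diagonal]
    have h4 : (fun i => Real.sqrt (d i) * Real.sqrt (d i)) = d := by
      funext i; exact Real.mul_self_sqrt (hdpos i).le
    rw [h4, ← hB']
  have hM0diag : ∀ i, M₀ i i ≠ 0 := by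
    intro i
    rw [hM0app]
    have h1 : W⁻¹ i i ≠ 0 := fun h => by simpa [h] using hWdiag i
    exact mul_ne_zero h1 (ne_of_gt (Real.sqrt_pos.mpr (hdpos i)))
  have hM0tri : ∀ i j : Fin p, i < j → M₀ i j = 0 := by
    intro i j hij; rw [hM0app, hWinvtri i j hij, zero_mul]
  set E : Matrix (Fin p) (Fin p) ℝ :=
    Matrix.diagonal (fun i => if 0 < M₀ i i then (1:ℝ) else -1) with hEdef
  set M : Matrix (Fin p) (Fin p) ℝ := M₀ * E with hMdef
  have hMapp : ∀ i j, M i j = M₀ i j * (if 0 < M₀ j j then (1:ℝ) else -1) := by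
    intro i j; rw [hMdef, hEdef, Matrix.mul_diagonal]
  have hMtri : ∀ i j : Fin p, i < j → M i j = 0 := by
    intro i j hij; rw [hMapp, hM0tri i j hij, zero_mul]
  have hMdiag : ∀ i, 0 < M i i := by
    intro i
    rw [hMapp]
    by_cases h : 0 < M₀ i i
    · simpa [h] using h
    · have h2 : M₀ i i < 0 := lt_of_le_of_ne (not_lt.mp h) (hM0diag i)
      simp only [h, if_false]
      nlinarith
  have hMfact : M * Mᵀ = B := by
    have hEE : E * Eᵀ = 1 := by
      rw [hEdef, Matrix.diagonal_transpose, Matrix.diagonal_mul_diagonal]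
      have : (fun i => (if 0 < M₀ i i then (1:ℝ) else -1) *
          (if 0 < M₀ i i then (1:ℝ) else -1)) = fun _ => (1:ℝ) := by
        funext i; split <;> norm_num
      rw [this, Matrix.diagonal_one]
    rw [hMdef, Matrix.transpose_mul]
    have h5 : M₀ * E * (Eᵀ * M₀ᵀ) = M₀ * (E * Eᵀ) * M₀ᵀ := by
      simp only [Matrix.mul_assoc]
    rw [h5, hEE, Matrix.mul_one, ← hBfact]
  refine ⟨Matrix.of fun k j => M (e j) (e k), ⟨?_, ?_⟩, ?_⟩
  · intro i j hij
    refine hMtri (e j) (e i) ?_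
    simp only [he, Fin.revPerm_apply]
    exact Fin.rev_lt_rev.mpr (Fin.lt_def.mpr hij)
  · intro i
    exact hMdiag (e i)
  · ext i j
    rw [Matrix.mul_apply]
    simp only [Matrix.transpose_apply, Matrix.of_apply]
    have h6 : ∑ k : Fin p, M (e i) (e k) * M (e j) (e k) =
        ∑ k : Fin p, M (e i) k * M (e j) k :=
      Equiv.sum_comp e (fun k => M (e i) k * M (e j) k)
    rw [h6]
    have h7 : ∑ k : Fin p, M (e i) k * M (e j) k = (M * Mᵀ) (e i) (e j) := by
      rw [Matrix.mul_apply]; simp only [Matrix.transpose_apply]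
    rw [h7, hMfact, hBdef]
    simp [he]

lemma det_eq_prod_diag {p : ℕ} {L : Matrix (Fin p) (Fin p) ℝ} (hL : LowerTriPos L) :
    L.det = ∏ i, L i i := by
  have hbt : Lᵀ.BlockTriangular id := by
    intro i j hij
    exact hL.1 j i (Fin.lt_def.mp hij)
  have := Matrix.det_of_upperTriangular hbt
  rw [Matrix.det_transpose] at this
  simpa using this

lemma transfer {p : ℕ} (σ : Equiv.Perm (Fin p)) {L : Matrix (Fin p) (Fin p) ℝ}
    (hL : LowerTriPos L) :
    ∃ L' : Matrix (Fin p) (Fin p) ℝ, LowerTriPos L' ∧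
      L'ᵀ * L' = (σ.permMatrix ℝ)ᵀ * (Lᵀ * L) * σ.permMatrix ℝ ∧
      ∑ j, Real.log (L' j j) = ∑ j, Real.log (L j j) := by
  set P : Matrix (Fin p) (Fin p) ℝ := σ.permMatrix ℝ with hPdef
  set M : Matrix (Fin p) (Fin p) ℝ := L * P with hMdef
  have hdetL : L.det = ∏ i, L i i := det_eq_prod_diag hL
  have hdetLpos : 0 < L.det := hdetL ▸ Finset.prod_pos (fun i _ => hL.2 i)
  have hPdet2 : P.det * P.det = 1 := by
    rw [hPdef, Matrix.det_permutation]
    have h : ((Equiv.Perm.sign σ : ℤˣ) : ℤ) * ((Equiv.Perm.sign σ : ℤˣ) : ℤ) = 1 := by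
      rcases Int.units_eq_one_or (Equiv.Perm.sign σ) with h | h <;> simp [h]
    exact_mod_cast h
  have hPdetne : P.det ≠ 0 := by
    intro h; rw [h, zero_mul] at hPdet2; exact zero_ne_one hPdet2
  have hMdet : IsUnit M.det := by
    rw [hMdef, Matrix.det_mul]
    exact isUnit_iff_ne_zero.mpr (mul_ne_zero hdetLpos.ne' hPdetne)
  have hPD : (Mᵀ * M).PosDef := by
    have h := posdef_conj (Matrix.PosDef.one (n := Fin p) (R := ℝ)) hMdet
    simpa using h
  obtain ⟨L', hL', hfact⟩ := revChol hPD
  have hfact' : L'ᵀ * L' = Pᵀ * (Lᵀ * L) * P := by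
    rw [hfact, hMdef]
    simp only [Matrix.transpose_mul, Matrix.mul_assoc]
  refine ⟨L', hL', hfact', ?_⟩
  have hdetL' : L'.det = ∏ i, L' i i := det_eq_prod_diag hL'
  have hdetL'pos : 0 < L'.det := hdetL' ▸ Finset.prod_pos (fun i _ => hL'.2 i)
  have hsq : L'.det * L'.det = L.det * L.det := by
    have h1 : (L'ᵀ * L').det = L'.det * L'.det := by
      rw [Matrix.det_mul, Matrix.det_transpose]
    have h2 : (Mᵀ * M).det = L.det * L.det := by
      rw [Matrix.det_mul, Matrix.det_transpose, hMdef, Matrix.det_mul]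
      calc L.det * P.det * (L.det * P.det) = L.det * L.det * (P.det * P.det) := by ring
      _ = L.det * L.det := by rw [hPdet2, mul_one]
    rw [hfact] at h1
    rw [← h1, h2]
  have hdeq : L'.det = L.det := by
    have h1 : L'.det ≤ L.det := by nlinarith
    have h2 : L.det ≤ L'.det := by nlinarith
    linarith
  rw [← Real.log_prod (fun i _ => (hL'.2 i).ne'),
    ← Real.log_prod (fun i _ => (hL.2 i).ne'), ← hdetL', ← hdetL, hdeq]

/-- Permutation invariance of the profiled Gaussian likelihood score:
the infimum over lower triangular matrices with positive diagonal does not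
depend on the permutation matrix `P`. -/
theorem score_permutation_invariant {p : ℕ}
    (S : Matrix (Fin p) (Fin p) ℝ) (hS : S.PosSemidef)
    (σ : Equiv.Perm (Fin p)) :
    sInf ((fun L => nllScore L (σ.permMatrix ℝ) S) ''
        {L : Matrix (Fin p) (Fin p) ℝ | LowerTriPos L}) =
      sInf ((fun L => nllScore L 1 S) ''
        {L : Matrix (Fin p) (Fin p) ℝ | LowerTriPos L}) := by
  set P : Matrix (Fin p) (Fin p) ℝ := σ.permMatrix ℝ with hPdef
  have hPinv : (σ⁻¹).permMatrix ℝ = Pᵀ := by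
    rw [hPdef, Equiv.Perm.permMatrix, Equiv.Perm.permMatrix, ← PEquiv.toMatrix_symm,
      ← Equiv.toPEquiv_symm]
    congr 1
  have hPP : Pᵀ * P = 1 := by
    rw [← hPinv, hPdef, Equiv.Perm.permMatrix, Equiv.Perm.permMatrix,
      ← PEquiv.toMatrix_trans, ← Equiv.toPEquiv_trans]
    have h : (σ⁻¹ : Equiv.Perm (Fin p)).trans σ = Equiv.refl (Fin p) := by
      ext x; simp
    rw [h, Equiv.toPEquiv_refl, PEquiv.toMatrix_refl]
  refine congrArg sInf (Set.ext fun y => ⟨?_, ?_⟩)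
  · rintro ⟨L, hL, rfl⟩
    obtain ⟨L', hL', hfact, hlog⟩ := transfer σ hL
    refine ⟨L', hL', ?_⟩
    show nllScore L' 1 S = nllScore L P S
    unfold nllScore
    rw [hlog]
    have h1 : 1 * S * (1 : Matrix (Fin p) (Fin p) ℝ)ᵀ * L'ᵀ * L' =
        S * (Pᵀ * (Lᵀ * L)) * P := by
      rw [Matrix.transpose_one, Matrix.one_mul, Matrix.mul_one, Matrix.mul_assoc, hfact]
      simp only [Matrix.mul_assoc]
      rfl
    have ht : ((1:Matrix (Fin p) (Fin p) ℝ) * S * (1 : Matrix (Fin p) (Fin p) ℝ)ᵀ * L'ᵀ * L').trace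
        = (P * S * Pᵀ * Lᵀ * L).trace := by
      rw [h1, Matrix.trace_mul_cycle]
      simp only [Matrix.mul_assoc]
    rw [ht]
  · rintro ⟨L', hL', rfl⟩
    obtain ⟨L, hL, hfact, hlog⟩ := transfer σ⁻¹ hL'
    refine ⟨L, hL, ?_⟩
    show nllScore L P S = nllScore L' 1 S
    unfold nllScore
    rw [hlog]
    rw [hPinv, Matrix.transpose_transpose] at hfact
    have h1 : P * S * Pᵀ * Lᵀ * L = P * (S * (L'ᵀ * L')) * Pᵀ := by
      have h2 : P * S * Pᵀ * Lᵀ * L = P * S * Pᵀ * (Lᵀ * L) := by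
        rw [Matrix.mul_assoc]
      rw [h2, hfact]
      have h3 : P * S * Pᵀ * (P * (L'ᵀ * L') * Pᵀ) =
          P * S * ((Pᵀ * P) * ((L'ᵀ * L') * Pᵀ)) := by
        simp only [Matrix.mul_assoc]
      rw [h3, hPP, Matrix.one_mul]
      simp only [Matrix.mul_assoc]
    have ht : (P * S * Pᵀ * Lᵀ * L).trace
        = ((1:Matrix (Fin p) (Fin p) ℝ) * S * (1 : Matrix (Fin p) (Fin p) ℝ)ᵀ * L'ᵀ * L').trace := by
      rw [h1, Matrix.trace_mul_cycle, ← Matrix.mul_assoc, hPP, Matrix.one_mul]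
      simp [Matrix.mul_assoc]
    rw [ht]
end
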